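/- Let W and T be real n×n matrices with W symmetric positive definite and T symmetric positive semidefinite, and let α > 0. Then, with ‖·‖₂ the spectral (operator ℓ²) norm and κ(W) = ‖W‖₂·‖W^{-1}‖₂, one has ‖(αW + T)^{-1}(W - αT)‖₂ ≤ √κ(W) · max over the eigenvalues μ of S = W^{-1/2} T W^{-1/2} of |1 - αμ|/(α + μ). -/

import Mathlib

open Matrix

open scoped ComplexOrder in
/-- The positive semidefinite square root of a positive semidefinite matrix
(restored with its former Mathlib definition, removed from Mathlib since). -/
noncomputable def Matrix.PosSemidef.sqrt {n : Type*} [Fintype n] [DecidableEq n]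
    {𝕜 : Type*} [RCLike 𝕜] {A : Matrix n n 𝕜} (hA : A.PosSemidef) : Matrix n n 𝕜 :=
  hA.isHermitian.eigenvectorUnitary.1 * diagonal ((↑) ∘ (√·) ∘ hA.isHermitian.eigenvalues) *
  (star hA.isHermitian.eigenvectorUnitary : Matrix n n 𝕜)

lemma sqrt_isHermitian_aux {n : ℕ} {A : Matrix (Fin n) (Fin n) ℝ} (hA : A.PosSemidef) :
    hA.sqrt.IsHermitian := by
  unfold Matrix.PosSemidef.sqrt
  rw [star_eq_conjTranspose]
  apply PosSemidef.isHermitian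
  apply PosSemidef.mul_mul_conjTranspose_same
  refine posSemidef_diagonal_iff.mpr fun i => ?_
  simp only [Function.comp_apply]
  exact Real.sqrt_nonneg _

lemma sqrt_mul_self_aux {n : ℕ} {A : Matrix (Fin n) (Fin n) ℝ} (hA : A.PosSemidef) :
    hA.sqrt * hA.sqrt = A := by
  let C : Matrix (Fin n) (Fin n) ℝ := hA.isHermitian.eigenvectorUnitary
  let E := diagonal ((↑) ∘ Real.sqrt ∘ hA.isHermitian.eigenvalues : Fin n → ℝ)
  suffices C * (E * (star C * C) * E) * star C = A by
    rw [Matrix.PosSemidef.sqrt]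
    change (C * E * star C) * (C * E * star C) = A
    simpa only [← mul_assoc] using this
  have : star C * C = 1 := by simp [C]
  rw [this, mul_one]
  have : E * E = diagonal hA.isHermitian.eigenvalues := by
    rw [diagonal_mul_diagonal]
    congr! with v
    simp [← pow_two, Real.sq_sqrt (hA.eigenvalues_nonneg v)]
  simpa [C, this] using hA.isHermitian.spectral_theorem.symm

/-- The operator norm on `n × n` real matrices induced by the Euclidean (`ℓ²`) vector norm. -/
noncomputable def l2OpNorm {n : ℕ} (M : Matrix (Fin n) (Fin n) ℝ) : ℝ :=
  ‖(Matrix.toEuclideanCLM (𝕜 := ℝ) M : EuclideanSpace ℝ (Fin n) →L[ℝ] EuclideanSpace ℝ (Fin n))‖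

open scoped Matrix.Norms.L2Operator

open scoped Matrix.Norms.L2Operator

lemma diag_norm_le {n : ℕ} (d : Fin n → ℝ) (C : ℝ) (hC : 0 ≤ C) (h : ∀ i, |d i| ≤ C) :
    ‖(Matrix.diagonal d : Matrix (Fin n) (Fin n) ℝ)‖ ≤ C := by
  rw [Matrix.l2_opNorm_def]
  refine ContinuousLinearMap.opNorm_le_bound _ hC fun x => ?_
  simp only [LinearEquiv.trans_apply, LinearMap.coe_toContinuousLinearMap']
  rw [toEuclideanLin_apply]
  rw [EuclideanSpace.norm_eq, EuclideanSpace.norm_eq]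
  rw [← Real.sqrt_sq hC, ← Real.sqrt_mul (by positivity)]
  apply Real.sqrt_le_sqrt
  rw [Finset.mul_sum]
  apply Finset.sum_le_sum
  intro i _
  simp only [PiLp.toLp_apply, mulVec_diagonal, Real.norm_eq_abs, abs_mul, mul_pow]
  have hx : (0:ℝ) ≤ |(x:Fin n → ℝ) i| ^ 2 := by positivity
  calc |d i| ^ 2 * |(x:Fin n → ℝ) i| ^ 2 ≤ C ^2 * |(x:Fin n → ℝ) i| ^ 2 := by
        apply mul_le_mul_of_nonneg_right _ hx
        exact pow_le_pow_left₀ (abs_nonneg _) (h i) 2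
    _ = C ^2 * ‖(x:Fin n → ℝ) i‖ ^ 2 := by rw [Real.norm_eq_abs]

lemma key {n : ℕ} (hn : 0 < n) (S : Matrix (Fin n) (Fin n) ℝ) (hS : S.IsHermitian)
    (α : ℝ) (hα : 0 < α) (hev : ∀ i, 0 ≤ hS.eigenvalues i) :
    ‖(α • (1:Matrix (Fin n) (Fin n) ℝ) + S)⁻¹ * (1 - α • S)‖ ≤
      ⨆ i, |1 - α * hS.eigenvalues i| / (α + hS.eigenvalues i) := by
  haveI : Nonempty (Fin n) := ⟨⟨0, hn⟩⟩
  set μ := hS.eigenvalues with hμ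
  set V : Matrix (Fin n) (Fin n) ℝ := (hS.eigenvectorUnitary : Matrix (Fin n) (Fin n) ℝ) with hV
  have hmem : V ∈ unitary (Matrix (Fin n) (Fin n) ℝ) := hS.eigenvectorUnitary.prop
  have hpos : ∀ i, 0 < α + μ i := fun i => by have := hev i; linarith
  have hUU : V * star V = 1 := hmem.2
  have hUU' : star V * V = 1 := hmem.1
  have hspec : S = V * diagonal μ * star V := by
    have := hS.spectral_theorem
    rwa [RCLike.ofReal_real_eq_id, Function.id_comp] at this
  have cmul : ∀ v w : Fin n → ℝ, (V * diagonal v * star V) * (V * diagonal w * star V) =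
      V * diagonal (fun i => v i * w i) * star V := by
    intro v w
    calc (V * diagonal v * star V) * (V * diagonal w * star V)
        = V * (diagonal v * ((star V * V) * (diagonal w * star V))) := by
          simp only [mul_assoc]
      _ = V * (diagonal v * (diagonal w * star V)) := by rw [hUU', one_mul]
      _ = V * ((diagonal v * diagonal w) * star V) := by rw [mul_assoc]
      _ = V * diagonal (fun i => v i * w i) * star V := by
          rw [diagonal_mul_diagonal, mul_assoc]
  have hconst : ∀ r : ℝ, diagonal (fun _ : Fin n => r) = r • (1:Matrix (Fin n) (Fin n) ℝ) := by
    intro r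
    ext i j
    simp only [diagonal_apply, Matrix.smul_apply, Matrix.one_apply, smul_eq_mul]
    split_ifs <;> simp
  have hαS : α • (1:Matrix (Fin n) (Fin n) ℝ) + S = V * diagonal (fun i => α + μ i) * star V := by
    have h1 : diagonal (fun i => α + μ i) =
        diagonal (fun _ : Fin n => α) + diagonal μ := by rw [diagonal_add]
    rw [h1, hconst, mul_add, add_mul, hspec]
    congr 1
    rw [mul_smul_comm, smul_mul_assoc, mul_one, hUU]
  have hsub : (1:Matrix (Fin n) (Fin n) ℝ) - α • S = V * diagonal (fun i => 1 - α * μ i) * star V := by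
    have h1 : diagonal (fun i => 1 - α * μ i) =
        diagonal (fun _ : Fin n => (1:ℝ)) - diagonal (fun i => α * μ i) := by rw [diagonal_sub]
    have h2 : diagonal (fun i => α * μ i) = α • diagonal μ := by
      ext i j
      simp only [diagonal_apply, Matrix.smul_apply, smul_eq_mul]
      split_ifs <;> simp
    rw [h1, hconst, h2, one_smul, mul_sub, sub_mul, hspec]
    congr 1
    · rw [mul_one, hUU]
    · rw [mul_smul_comm, smul_mul_assoc]
  have hinv : (α • (1:Matrix (Fin n) (Fin n) ℝ) + S)⁻¹ =
      V * diagonal (fun i => (α + μ i)⁻¹) * star V := by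
    apply Matrix.inv_eq_left_inv
    rw [hαS, cmul]
    have : (fun i => (α + μ i)⁻¹ * (α + μ i)) = fun _ : Fin n => (1:ℝ) :=
      funext fun i => inv_mul_cancel₀ (hpos i).ne'
    rw [this, diagonal_one, mul_one, hUU]
  have hM : (α • (1:Matrix (Fin n) (Fin n) ℝ) + S)⁻¹ * ((1:Matrix (Fin n) (Fin n) ℝ) - α • S) =
      V * diagonal (fun i => (α + μ i)⁻¹ * (1 - α * μ i)) * star V := by
    rw [hinv, hsub, cmul]
  rw [hM]
  set C := ⨆ i, |1 - α * μ i| / (α + μ i) with hC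
  have hbdd : BddAbove (Set.range fun i => |1 - α * μ i| / (α + μ i)) :=
    Set.Finite.bddAbove (Set.finite_range _)
  have hle : ∀ i, |1 - α * μ i| / (α + μ i) ≤ C := fun i => le_ciSup hbdd i
  have hC0 : 0 ≤ C := by
    obtain ⟨i⟩ := ‹Nonempty (Fin n)›
    exact le_trans (div_nonneg (abs_nonneg _) (hpos i).le) (hle i)
  rw [mul_assoc, CStarRing.norm_mem_unitary_mul _ hmem,
    CStarRing.norm_mul_mem_unitary _ (Unitary.star_mem hmem)]
  apply diag_norm_le _ _ hC0
  intro i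
  rw [abs_mul, abs_inv, abs_of_pos (hpos i), inv_mul_eq_div]
  exact hle i


lemma l2OpNorm_eq {n : ℕ} (A : Matrix (Fin n) (Fin n) ℝ) : l2OpNorm A = ‖A‖ := rfl

lemma main_aux {n : ℕ} (hn : 0 < n) (W T R S : Matrix (Fin n) (Fin n) ℝ)
    (hT : T.PosSemidef) (hRH : R.IsHermitian) (hRR : R * R = W) (hRdet : IsUnit R.det)
    (hWdp : 0 < W.det)
    (hSdef : S = R⁻¹ * T * R⁻¹) (hS : S.IsHermitian) (α : ℝ) (hα : 0 < α) :
    l2OpNorm ((α • W + T)⁻¹ * (W - α • T)) ≤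
      Real.sqrt (l2OpNorm W * l2OpNorm W⁻¹) *
        (⨆ i, |1 - α * hS.eigenvalues i| / (α + hS.eigenvalues i)) := by
  have hRinv : R * R⁻¹ = 1 := mul_nonsing_inv R hRdet
  have hRinv' : R⁻¹ * R = 1 := nonsing_inv_mul R hRdet
  have hRiH : R⁻¹.IsHermitian := hRH.inv
  have hSpsd : S.PosSemidef := by
    rw [hSdef]
    have := hT.mul_mul_conjTranspose_same R⁻¹
    rwa [hRiH.eq] at this
  have hev : ∀ i, 0 ≤ hS.eigenvalues i := fun i => hSpsd.eigenvalues_nonneg i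
  have hT' : R * S * R = T := by
    rw [hSdef]
    calc R * (R⁻¹ * T * R⁻¹) * R = R * R⁻¹ * T * R⁻¹ * R := by simp only [mul_assoc]
      _ = T := by rw [hRinv, one_mul, mul_assoc, hRinv', mul_one]
  have hA1 : α • W + T = R * (α • (1:Matrix (Fin n) (Fin n) ℝ) + S) * R := by
    rw [mul_add, add_mul, hT', mul_smul_comm, smul_mul_assoc, mul_one, hRR]
  have hA2 : W - α • T = R * ((1:Matrix (Fin n) (Fin n) ℝ) - α • S) * R := by
    rw [mul_sub, sub_mul, mul_one, hRR, mul_smul_comm, smul_mul_assoc, hT']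
  set X := α • (1:Matrix (Fin n) (Fin n) ℝ) + S with hX
  set Y := (1:Matrix (Fin n) (Fin n) ℝ) - α • S with hY
  have hprod : (α • W + T)⁻¹ * (W - α • T) = R⁻¹ * (X⁻¹ * Y) * R := by
    rw [hA1, hA2, Matrix.mul_inv_rev, Matrix.mul_inv_rev]
    calc R⁻¹ * (X⁻¹ * R⁻¹) * (R * Y * R)
        = R⁻¹ * (X⁻¹ * ((R⁻¹ * R) * (Y * R))) := by simp only [mul_assoc]
      _ = R⁻¹ * (X⁻¹ * (Y * R)) := by rw [hRinv', one_mul]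
      _ = R⁻¹ * (X⁻¹ * Y) * R := by simp only [mul_assoc]
  have hnW : ‖W‖ = ‖R‖ * ‖R‖ := by
    have h := Matrix.l2_opNorm_conjTranspose_mul_self R
    rw [hRH.eq] at h
    rw [← hRR]; exact h
  have hWinv : W⁻¹ = R⁻¹ * R⁻¹ := by rw [← hRR, Matrix.mul_inv_rev]
  have hnWi : ‖W⁻¹‖ = ‖R⁻¹‖ * ‖R⁻¹‖ := by
    have h := Matrix.l2_opNorm_conjTranspose_mul_self R⁻¹
    rw [hRiH.eq] at h
    rw [hWinv]; exact h
  have hsqrt : Real.sqrt (‖W‖ * ‖W⁻¹‖) = ‖R‖ * ‖R⁻¹‖ := by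
    rw [hnW, hnWi, show ‖R‖ * ‖R‖ * (‖R⁻¹‖ * ‖R⁻¹‖) = (‖R‖ * ‖R⁻¹‖) * (‖R‖ * ‖R⁻¹‖) by ring,
      Real.sqrt_mul_self (by positivity)]
  have hkey := key hn S hS α hα hev
  calc l2OpNorm ((α • W + T)⁻¹ * (W - α • T)) = ‖R⁻¹ * (X⁻¹ * Y) * R‖ := by
        rw [l2OpNorm_eq, hprod]
    _ ≤ ‖R⁻¹ * (X⁻¹ * Y)‖ * ‖R‖ := norm_mul_le _ _
    _ ≤ ‖R⁻¹‖ * ‖X⁻¹ * Y‖ * ‖R‖ :=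
        mul_le_mul_of_nonneg_right (norm_mul_le _ _) (norm_nonneg _)
    _ ≤ ‖R⁻¹‖ * (⨆ i, |1 - α * hS.eigenvalues i| / (α + hS.eigenvalues i)) * ‖R‖ := by
        refine mul_le_mul_of_nonneg_right ?_ (norm_nonneg _)
        exact mul_le_mul_of_nonneg_left hkey (norm_nonneg _)
    _ = Real.sqrt (l2OpNorm W * l2OpNorm W⁻¹) *
        (⨆ i, |1 - α * hS.eigenvalues i| / (α + hS.eigenvalues i)) := by
        rw [l2OpNorm_eq, l2OpNorm_eq, hsqrt]; ring

/-- **Lemma 2, estimate for `c_h(α)`.** For `W` symmetric positive definite, `T` symmetric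
positive semidefinite and `α > 0`,
`‖(αW + T)⁻¹(W - αT)‖₂ ≤ √κ(W) · max_{μ ∈ σ(S)} |1 - αμ|/(α + μ)`,
where `S = W^{-1/2} T W^{-1/2}` and `κ(W) = ‖W‖₂·‖W⁻¹‖₂`. -/
theorem c_h_bound
    {n : ℕ} (hn : 0 < n)
    (W T : Matrix (Fin n) (Fin n) ℝ)
    (hW : W.PosDef) (hT : T.PosSemidef)
    (S : Matrix (Fin n) (Fin n) ℝ)
    (hSdef : S = (hW.posSemidef.sqrt)⁻¹ * T * (hW.posSemidef.sqrt)⁻¹)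
    (hS : S.IsHermitian)
    (α : ℝ) (hα : 0 < α) :
    l2OpNorm ((α • W + T)⁻¹ * (W - α • T)) ≤
      Real.sqrt (l2OpNorm W * l2OpNorm W⁻¹) *
        (⨆ i, |1 - α * hS.eigenvalues i| / (α + hS.eigenvalues i)) := by
  have hRH : (hW.posSemidef.sqrt).IsHermitian := sqrt_isHermitian_aux hW.posSemidef
  have hRR : hW.posSemidef.sqrt * hW.posSemidef.sqrt = W := sqrt_mul_self_aux hW.posSemidef
  have hRdet : IsUnit (hW.posSemidef.sqrt).det := by
    refine isUnit_iff_ne_zero.mpr fun h0 => ?_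
    have : W.det = 0 := by rw [← hRR, det_mul, h0, mul_zero]
    exact hW.det_pos.ne' this
  exact main_aux hn W T _ S hT hRH hRR hRdet hW.det_pos hSdef hS α hα
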